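/- For any two distinct elements e and f of PG(3,2), the matroid obtained from PG(3,2) by deleting e and f is an even-cycle matroid; it is a simple even-cycle matroid of rank 4 with 13 = 4^2 - 4 + 1 elements, and is thus a largest simple even-cycle matroid of rank 4. -/

import Mathlib

open Set Matroid

noncomputable section

/-- Augmentation property for linear independence of columns. -/
theorem colIndep_aug {K V n : Type*} [Field K] [AddCommGroup V] [Module K V]
    [FiniteDimensional K V] [Finite n] (v : n → V) {I J : Set n}
    (hI : LinearIndependent K (fun i : I => v i)) (hJ : LinearIndependent K (fun i : J => v i))
    (hcard : I.ncard < J.ncard) :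
    ∃ e ∈ J, e ∉ I ∧ LinearIndependent K (fun i : ↥(insert e I) => v i) := by
  classical
  by_contra h
  push_neg at h
  have hspan : ∀ e ∈ J, v e ∈ Submodule.span K (v '' I) := by
    intro e he
    by_cases heI : e ∈ I
    · exact Submodule.subset_span ⟨e, heI, rfl⟩
    by_contra hsp
    exact h e he heI ((linearIndepOn_insert (f := v) heI).2 ⟨hI, hsp⟩)
  have hle : Submodule.span K (v '' J) ≤ Submodule.span K (v '' I) := by
    rw [Submodule.span_le]
    rintro _ ⟨e, he, rfl⟩
    exact hspan e he
  haveI : Fintype I := (Set.toFinite I).fintype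
  haveI : Fintype J := (Set.toFinite J).fintype
  have hIcard : Module.finrank K (Submodule.span K (v '' I)) = I.ncard := by
    rw [Set.image_eq_range, finrank_span_eq_card hI, Set.ncard_eq_toFinset_card',
      Set.toFinset_card]
  have hJcard : Module.finrank K (Submodule.span K (v '' J)) = J.ncard := by
    rw [Set.image_eq_range, finrank_span_eq_card hJ, Set.ncard_eq_toFinset_card',
      Set.toFinset_card]
  have := Submodule.finrank_mono (R := K) hle
  omega

/-- The column matroid of a matrix over `GF(2)`: the matroid on the columns of `A`,
where a set of columns is independent iff it is linearly independent over `GF(2)`. -/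
def colMatroid {m n : Type*} [Fintype m] [Fintype n] (A : Matrix m n (ZMod 2)) : Matroid n :=
  (IndepMatroid.ofFinite (Set.finite_univ (α := n))
    (fun I => LinearIndependent (ZMod 2) (fun i : I => A.transpose i))
    linearIndependent_empty_type
    (fun I J hJ hIJ => hJ.comp (Set.inclusion hIJ) (Set.inclusion_injective hIJ))
    (fun I J hI hJ hc => colIndep_aug A.transpose hI hJ hc)
    (fun I _ => Set.subset_univ I)).matroid

namespace Matroid

/-- Deletion of a set of elements from a matroid. -/
def del {α : Type*} (M : Matroid α) (D : Set α) : Matroid α := M ↾ (M.E \ D)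

/-- Contraction of a set of elements from a matroid, defined by duality. -/
def con {α : Type*} (M : Matroid α) (C : Set α) : Matroid α := (M✶.del C)✶

/-- Matroid isomorphism: a bijection between ground sets preserving independence. -/
def IsoTo {α β : Type*} (M : Matroid α) (N : Matroid β) : Prop :=
  ∃ φ : α → β, Set.BijOn φ M.E N.E ∧ ∀ I ⊆ M.E, (M.Indep I ↔ N.Indep (φ '' I))

/-- `M` has a minor isomorphic to `N`. -/
def HasMinorIsoTo {α β : Type*} (M : Matroid α) (N : Matroid β) : Prop :=
  ∃ C D : Set α, ((M.con C).del D).IsoTo N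

/-- A binary matroid: one isomorphic to the column matroid of a matrix over `GF(2)`. -/
def IsBinary {α : Type*} (M : Matroid α) : Prop :=
  ∃ (k l : ℕ) (A : Matrix (Fin k) (Fin l) (ZMod 2)), M.IsoTo (colMatroid A)

/-- A simple matroid: no loops and no pair of distinct parallel elements,
i.e. every subset of the ground set of size at most two is independent. -/
def IsSimple' {α : Type*} (M : Matroid α) : Prop :=
  ∀ e ∈ M.E, ∀ f ∈ M.E, M.Indep {e, f}

/-- `N` is a simplification of `M`: `N` is a simple restriction of `M` containing
an element of every parallel class of `M`. -/
def IsSimplificationOf {α : Type*} (N M : Matroid α) : Prop :=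
  ∃ S ⊆ M.E, N = M ↾ S ∧ N.IsSimple' ∧
    ∀ e ∈ M.E, M.Indep {e} → ∃ f ∈ S, e = f ∨ ¬ M.Indep {e, f}

/-- `N` is a cosimplification of `M`: the dual of `N` is a simplification of the dual of `M`. -/
def IsCosimplificationOf {α : Type*} (N M : Matroid α) : Prop :=
  N✶.IsSimplificationOf M✶

/-- A circuit: a minimal dependent set. -/
def IsCircuitOf {α : Type*} (M : Matroid α) (C : Set α) : Prop :=
  C ⊆ M.E ∧ ¬ M.Indep C ∧ ∀ D ⊂ C, M.Indep D

end Matroid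

/-- `r` is a row of `A` such that every column of `A` has at most two nonzero entries
outside row `r`. -/
def EvenCycleRep {m n : Type*} (A : Matrix m n (ZMod 2)) (r : m) : Prop :=
  ∀ j : n, ({i : m | i ≠ r ∧ A i j ≠ 0}).ncard ≤ 2

/-- An even-cycle matroid: one isomorphic to the column matroid of a `GF(2)` matrix having
a row `r` such that every column has at most two nonzero entries outside row `r`. -/
def Matroid.IsEvenCycle {α : Type*} (M : Matroid α) : Prop :=
  ∃ (k l : ℕ) (A : Matrix (Fin k) (Fin l) (ZMod 2)) (r : Fin k),
    EvenCycleRep A r ∧ M.IsoTo (colMatroid A)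

/-- Every column of `A` has at most two nonzero entries. -/
def GraphicRep {m n : Type*} (A : Matrix m n (ZMod 2)) : Prop :=
  ∀ j : n, ({i : m | A i j ≠ 0}).ncard ≤ 2

/-- A graphic matroid: one isomorphic to the column matroid of a `GF(2)` matrix in which
every column has at most two nonzero entries. -/
def Matroid.IsGraphic {α : Type*} (M : Matroid α) : Prop :=
  ∃ (k l : ℕ) (A : Matrix (Fin k) (Fin l) (ZMod 2)),
    GraphicRep A ∧ M.IsoTo (colMatroid A)

/-- A cographic matroid: the dual of a graphic matroid. -/
def Matroid.IsCographic {α : Type*} (M : Matroid α) : Prop := M✶.IsGraphic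

/-- An even-cut matroid: one isomorphic to the column matroid of a `GF(2)` matrix `A` having a
row `r` such that the column matroid of the matrix obtained by deleting row `r` is cographic. -/
def Matroid.IsEvenCut {α : Type*} (M : Matroid α) : Prop :=
  ∃ (k l : ℕ) (A : Matrix (Fin k) (Fin l) (ZMod 2)) (r : Fin k),
    (colMatroid (A.submatrix (Subtype.val : {i : Fin k // i ≠ r} → Fin k) id)).IsCographic ∧
    M.IsoTo (colMatroid A)

/-- `r₁, r₂` are rows of `A` such that every column of `A` either has at most one nonzero entry
outside rows `r₁, r₂`, or has exactly two nonzero entries outside rows `r₁, r₂` and is zero in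
both rows `r₁` and `r₂`. -/
def BlockingPairRep {m n : Type*} (A : Matrix m n (ZMod 2)) (r₁ r₂ : m) : Prop :=
  ∀ j : n, ({i : m | i ≠ r₁ ∧ i ≠ r₂ ∧ A i j ≠ 0}).ncard ≤ 1 ∨
    (({i : m | i ≠ r₁ ∧ i ≠ r₂ ∧ A i j ≠ 0}).ncard = 2 ∧ A r₁ j = 0 ∧ A r₂ j = 0)

/-- An even-cycle matroid with a blocking pair. -/
def Matroid.IsEvenCycleBP {α : Type*} (M : Matroid α) : Prop :=
  ∃ (k l : ℕ) (A : Matrix (Fin k) (Fin l) (ZMod 2)) (r₁ r₂ : Fin k), r₁ ≠ r₂ ∧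
    BlockingPairRep A r₁ r₂ ∧ M.IsoTo (colMatroid A)

/-- `N` is an excluded minor for the class of matroids satisfying `P`. -/
def IsExcludedMinorFor {α : Type*} (N : Matroid α) (P : Matroid α → Prop) : Prop :=
  ¬ P N ∧ ∀ e ∈ N.E, P (N.del {e}) ∧ P (N.con {e})

/-- The points of the binary projective space `PG(3,2)`: nonzero vectors of `GF(2)^4`. -/
abbrev PGIdx : Type := {v : Fin 4 → ZMod 2 // v ≠ 0}

/-- The matrix whose columns are the 15 nonzero vectors of `GF(2)^4`. -/
def PGMatrix : Matrix (Fin 4) PGIdx (ZMod 2) := fun i v => v.1 i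

/-- The binary projective geometry `PG(3,2)`. -/
def PG32 : Matroid PGIdx := colMatroid PGMatrix

/-- The vertex-edge incidence matrix of a simple graph on vertex set `V` whose edges are a
set of pairs `(u, w)` with `u < w`. -/
def incMatrix {k : ℕ} (E : Type*) (val : E → Fin k × Fin k) :
    Matrix (Fin k) E (ZMod 2) :=
  fun i e => if i = (val e).1 ∨ i = (val e).2 then 1 else 0

/-- Edges of `K7` minus two adjacent edges. -/
abbrev L19Edge : Type := {p : Fin 7 × Fin 7 // p.1 < p.2 ∧ p ≠ (0, 1) ∧ p ≠ (0, 2)}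

/-- `L19`: the dual of the cycle matroid of `K7` minus two adjacent edges. -/
def L19 : Matroid L19Edge := (colMatroid (incMatrix L19Edge Subtype.val))✶

/-- The matroid `L11`. -/
def L11 : Matroid (Fin 11) :=
  colMatroid (!![1,0,0,0,0,0,1,0,1,0,1;
                 0,1,0,0,0,0,1,0,0,1,1;
                 0,0,1,0,0,0,0,1,1,1,0;
                 0,0,0,1,0,0,0,1,1,0,1;
                 0,0,0,0,1,0,0,1,0,1,1;
                 0,0,0,0,0,1,0,0,1,1,1] : Matrix (Fin 6) (Fin 11) (ZMod 2))

/-- Edges of the complete graph `K6`. -/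
abbrev K6Edge : Type := {p : Fin 6 × Fin 6 // p.1 < p.2}

/-- The cycle matroid `M(K6)`. -/
def MK6 : Matroid K6Edge := colMatroid (incMatrix K6Edge Subtype.val)

/-- Edges of `K6` minus an edge. -/
abbrev K6eEdge : Type := {p : Fin 6 × Fin 6 // p.1 < p.2 ∧ p ≠ (0, 1)}

/-- The cycle matroid `M(K6 \ e)`. -/
def MK6e : Matroid K6eEdge := colMatroid (incMatrix K6eEdge Subtype.val)

/-- Edges of the complete graph `K5`. -/
abbrev K5Edge : Type := {p : Fin 5 × Fin 5 // p.1 < p.2}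

/-- The cycle matroid `M(K5)`. -/
def MK5 : Matroid K5Edge := colMatroid (incMatrix K5Edge Subtype.val)

/-- The matroid `H12`. -/
def H12 : Matroid (Fin 12) :=
  colMatroid (!![1,0,1,0,1,0,1,0,1,0,1,0;
                 0,0,0,0,1,1,1,1,0,0,0,0;
                 0,0,0,0,1,1,0,0,1,1,0,0;
                 1,1,0,0,0,0,0,0,0,0,1,1;
                 0,0,1,1,0,0,1,1,0,0,1,1] : Matrix (Fin 5) (Fin 12) (ZMod 2))

end

section Count
open Finset

private lemma z2one : ∀ a : ZMod 2, a ≠ 0 → a = 1 := by decide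
private lemma z2add : ∀ a : ZMod 2, a + a = 0 := by decide
private lemma z2cancel : ∀ a b : ZMod 2, a + b = 0 → a = b := by decide

private lemma funadd {k : ℕ} (v : Fin k → ZMod 2) : v + v = 0 := by
  funext j; simp [z2add]

private lemma fun_add_eq_zero_iff {k : ℕ} (a b : Fin k → ZMod 2) : a + b = 0 ↔ a = b := by
  constructor
  · intro h; funext i; exact z2cancel _ _ (congrFun h i)
  · intro h; rw [h, funadd]

private lemma fun_add_shift {k : ℕ} (a b c : Fin k → ZMod 2) (h : a + b = c) : b = a + c := by
  rw [← h, ← add_assoc, funadd, zero_add]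

private lemma card_univ_F4 : (Finset.univ : Finset (Fin 4 → ZMod 2)).card = 16 := by
  simp [Finset.card_univ, ZMod.card]

private lemma pow3 {s : ℕ} (h : 8 ≤ 2 ^ s) : 3 ≤ s := by
  by_contra h'
  have : 2 ^ s ≤ 2 ^ 2 := Nat.pow_le_pow_right (by norm_num) (by omega)
  omega

private lemma pow4 {s : ℕ} (h : 16 ≤ 2 ^ s) : 4 ≤ s := by
  by_contra h'
  have : 2 ^ s ≤ 2 ^ 3 := Nat.pow_le_pow_right (by norm_num) (by omega)
  omega

lemma functional_card {k : ℕ} (L : (Fin 4 → ZMod 2) →ₗ[ZMod 2] (Fin k → ZMod 2))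
    (i : Fin k) (x₀ : Fin 4 → ZMod 2) (h0 : L x₀ i ≠ 0) :
    (Finset.univ.filter fun x : Fin 4 → ZMod 2 => L x i ≠ 0).card = 8 := by
  classical
  have h1 : L x₀ i = 1 := z2one _ h0
  have key : ∀ x : Fin 4 → ZMod 2, L (x + x₀) i = L x i + 1 := by
    intro x; rw [map_add]; simp [h1]
  have hinv : ∀ x : Fin 4 → ZMod 2, x + x₀ + x₀ = x := by
    intro x; rw [add_assoc, funadd, add_zero]
  have hswap : ∀ a : ZMod 2, a ≠ 0 → a + 1 = 0 := by decide
  have hswap' : ∀ a : ZMod 2, a = 0 → a + 1 ≠ 0 := by decide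
  have hcard : (Finset.univ.filter fun x => L x i ≠ 0).card
      = (Finset.univ.filter fun x => L x i = 0).card := by
    apply Finset.card_bij' (fun x _ => x + x₀) (fun x _ => x + x₀)
    · intro a ha; simp only [Finset.mem_filter, Finset.mem_univ, true_and] at ha ⊢
      rw [key]; exact hswap _ ha
    · intro a ha; simp only [Finset.mem_filter, Finset.mem_univ, true_and] at ha ⊢
      rw [key]; exact hswap' _ ha
    · intro a _; exact hinv a
    · intro a _; exact hinv a
  have htot := Finset.card_filter_add_card_filter_not
      (s := (Finset.univ : Finset (Fin 4 → ZMod 2))) (p := fun x => L x i ≠ 0)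
  simp only [ne_eq, not_not] at htot hcard ⊢
  rw [card_univ_F4] at htot
  omega

lemma total_eq {k : ℕ} (L : (Fin 4 → ZMod 2) →ₗ[ZMod 2] (Fin k → ZMod 2)) :
    ∑ x : Fin 4 → ZMod 2, (Finset.univ.filter fun i => L x i ≠ 0).card
      = 8 * (Finset.univ.filter fun i : Fin k => ∃ x, L x i ≠ 0).card := by
  classical
  have swap : ∑ x : Fin 4 → ZMod 2, (Finset.univ.filter fun i => L x i ≠ 0).card
      = ∑ i : Fin k, (Finset.univ.filter fun x => L x i ≠ 0).card := by
    simp_rw [Finset.card_filter]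
    exact Finset.sum_comm
  rw [swap]
  rw [← Finset.sum_subset (Finset.filter_subset (fun i : Fin k => ∃ x, L x i ≠ 0) Finset.univ)
    (by intro i _ hi
        simp only [Finset.mem_filter, Finset.mem_univ, true_and, not_exists, not_not] at hi
        simp only [Finset.card_eq_zero, Finset.filter_eq_empty_iff]
        intro x _; simp [hi x])]
  rw [Finset.sum_congr rfl (fun i hi => by
    simp only [Finset.mem_filter, Finset.mem_univ, true_and] at hi
    obtain ⟨x₀, hx₀⟩ := hi
    exact functional_card L i x₀ hx₀)]
  rw [Finset.sum_const, smul_eq_mul, mul_comm]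


lemma count_light_le {k : ℕ} (L : (Fin 4 → ZMod 2) →ₗ[ZMod 2] (Fin k → ZMod 2))
    (hker : ∀ x y, L x = 0 → L y = 0 → x = 0 ∨ y = 0 ∨ x = y) :
    (Finset.univ.filter fun x : Fin 4 → ZMod 2 =>
      x ≠ 0 ∧ (Finset.univ.filter fun i => L x i ≠ 0).card ≤ 2).card ≤ 13 := by
  classical
  by_contra hN
  push_neg at hN
  set W : (Fin 4 → ZMod 2) → ℕ := fun x => (Finset.univ.filter fun i => L x i ≠ 0).card with hW
  set S : Finset (Fin k) := Finset.univ.filter (fun i => ∃ x, L x i ≠ 0) with hS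
  have hoff : ∀ (x : Fin 4 → ZMod 2) (i : Fin k), i ∉ S → L x i = 0 := by
    intro x i hi; by_contra h
    exact hi (by simp only [hS, Finset.mem_filter, Finset.mem_univ, true_and]; exact ⟨x, h⟩)
  have hWle : ∀ x, W x ≤ S.card := by
    intro x
    apply Finset.card_le_card
    intro i hi
    simp only [Finset.mem_filter, Finset.mem_univ, true_and] at hi
    simp only [hS, Finset.mem_filter, Finset.mem_univ, true_and]
    exact ⟨x, hi⟩
  have hWzero : ∀ x : Fin 4 → ZMod 2, L x = 0 → W x = 0 := by
    intro x h; simp [hW, h]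
  have hW0 : W 0 = 0 := hWzero 0 (map_zero L)
  have htotal : ∑ x : Fin 4 → ZMod 2, W x = 8 * S.card := total_eq L
  have hne15 : (Finset.univ.filter fun x : Fin 4 → ZMod 2 => x ≠ 0).card = 15 := by
    have := Finset.card_filter_add_card_filter_not
      (s := (Finset.univ : Finset (Fin 4 → ZMod 2))) (p := fun x => x = 0)
    have h1 : (Finset.univ.filter fun x : Fin 4 → ZMod 2 => x = 0) = {0} := by
      ext x; simp
    rw [h1, card_univ_F4] at this
    simp only [Finset.card_singleton, ne_eq] at this ⊢
    omega
  set N : ℕ := (Finset.univ.filter fun x : Fin 4 → ZMod 2 => x ≠ 0 ∧ W x ≤ 2).card with hNdef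
  set H : ℕ := (Finset.univ.filter fun x : Fin 4 → ZMod 2 => x ≠ 0 ∧ ¬ W x ≤ 2).card with hHdef
  have hNH : N + H = 15 := by
    have := Finset.card_filter_add_card_filter_not
      (s := Finset.univ.filter fun x : Fin 4 → ZMod 2 => x ≠ 0) (p := fun x => W x ≤ 2)
    rw [Finset.filter_filter, Finset.filter_filter, hne15] at this
    exact this
  have hH1 : H ≤ 1 := by
    have : 13 < N := hN
    omega
  set τ : (Fin 4 → ZMod 2) → (↥S → ZMod 2) := fun x i => L x i.1 with hτ
  have hτiff : ∀ x y, τ x = τ y ↔ L (x + y) = 0 := by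
    intro x y
    constructor
    · intro h; funext i
      by_cases hi : i ∈ S
      · have h2 := congrFun h ⟨i, hi⟩
        simp only [hτ] at h2
        rw [map_add, Pi.add_apply, Pi.zero_apply, h2]
        exact z2add _
      · rw [map_add, Pi.add_apply, Pi.zero_apply, hoff x i hi, hoff y i hi, add_zero]
    · intro h; funext i
      have h2 := congrFun h i.1
      rw [map_add, Pi.add_apply, Pi.zero_apply] at h2
      exact z2cancel _ _ h2
  have hcodom : Fintype.card (↥S → ZMod 2) = 2 ^ S.card := by
    rw [Fintype.card_fun, ZMod.card, Fintype.card_coe]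
  have himle : (Finset.univ.image τ).card ≤ 2 ^ S.card := by
    rw [← hcodom]; exact Finset.card_le_univ _
  by_cases hz : ∃ z, z ≠ 0 ∧ L z = 0
  · obtain ⟨z, hz0, hzker⟩ := hz
    have hkz : ∀ x, L x = 0 → x = 0 ∨ x = z := by
      intro x h
      rcases hker x z h hzker with h1 | h1 | h1
      · exact Or.inl h1
      · exact absurd h1 hz0
      · exact Or.inr h1
    have hfib : ∀ w, (Finset.univ.filter fun x => τ x = w).card ≤ 2 := by
      intro w
      rcases (Finset.univ.filter fun x => τ x = w).eq_empty_or_nonempty with he | ⟨a, ha⟩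
      · simp [he]
      · have hsub : (Finset.univ.filter fun x => τ x = w) ⊆ {a, a + z} := by
          intro b hb
          simp only [Finset.mem_filter, Finset.mem_univ, true_and] at ha hb
          have hab : L (a + b) = 0 := (hτiff a b).1 (ha.trans hb.symm)
          rcases hkz _ hab with h | h
          · have : a = b := (fun_add_eq_zero_iff a b).1 h
            simp [this]
          · have : b = a + z := fun_add_shift a b z h
            simp [this]
        calc (Finset.univ.filter fun x => τ x = w).card ≤ ({a, a + z} : Finset _).card :=
              Finset.card_le_card hsub
          _ ≤ 2 := Finset.card_insert_le _ _ |>.trans (by simp)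
    have hs3lb : 3 ≤ S.card := by
      have h1 := Finset.card_le_mul_card_image (f := τ) Finset.univ 2
        (fun b _ => hfib b)
      rw [card_univ_F4] at h1
      have := himle
      exact pow3 (by omega)
    have hH0 : H = 0 := by
      by_contra hH0'
      obtain ⟨x, hx⟩ := Finset.card_pos.mp (Nat.pos_of_ne_zero hH0')
      simp only [Finset.mem_filter, Finset.mem_univ, true_and] at hx
      have hLxz : L (x + z) = L x := by rw [map_add, hzker, add_zero]
      have hWxz : W (x + z) = W x := by simp only [hW, hLxz]
      have hxz0 : x + z ≠ 0 := by
        intro h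
        have : x = z := (fun_add_eq_zero_iff x z).1 h
        rw [this] at hx
        exact hx.2 (by rw [hWzero z hzker]; omega)
      have hxzx : x ≠ x + z := by
        intro h
        have h2 : z = x + x := fun_add_shift x z x h.symm
        rw [funadd] at h2
        exact hz0 h2
      have hsub : ({x, x + z} : Finset _) ⊆
          Finset.univ.filter fun y : Fin 4 → ZMod 2 => y ≠ 0 ∧ ¬ W y ≤ 2 := by
        intro b hb
        simp only [Finset.mem_insert, Finset.mem_singleton] at hb
        rcases hb with rfl | rfl
        · simp only [Finset.mem_filter, Finset.mem_univ, true_and]; exact hx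
        · simp only [Finset.mem_filter, Finset.mem_univ, true_and]
          exact ⟨hxz0, by rw [hWxz]; exact hx.2⟩
      have := Finset.card_le_card hsub
      rw [Finset.card_pair hxzx] at this
      omega
    have hlight : ∀ x : Fin 4 → ZMod 2, x ≠ 0 → W x ≤ 2 := by
      intro x hx0
      by_contra h
      have hmem : x ∈ Finset.univ.filter fun y : Fin 4 → ZMod 2 => y ≠ 0 ∧ ¬ W y ≤ 2 := by
        simp only [Finset.mem_filter, Finset.mem_univ, true_and]; exact ⟨hx0, h⟩
      rw [Finset.card_eq_zero.mp hH0] at hmem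
      exact absurd hmem (Finset.notMem_empty x)
    have htot30 : ∑ x : Fin 4 → ZMod 2, W x ≤ 30 := by
      have hsplit := Finset.sum_filter_add_sum_filter_not
        (Finset.univ : Finset (Fin 4 → ZMod 2)) (fun x => x ≠ 0) W
      have h1 : ∑ x ∈ Finset.univ.filter (fun x : Fin 4 → ZMod 2 => x ≠ 0), W x ≤ 15 * 2 := by
        rw [← hne15]
        apply Finset.sum_le_card_nsmul
        intro x hx
        simp only [Finset.mem_filter, Finset.mem_univ, true_and] at hx
        exact hlight x hx
      have h2 : ∑ x ∈ Finset.univ.filter (fun x : Fin 4 → ZMod 2 => ¬ x ≠ 0), W x = 0 := by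
        apply Finset.sum_eq_zero
        intro x hx
        simp only [Finset.mem_filter, Finset.mem_univ, true_and, not_not] at hx
        rw [hx, hW0]
      omega
    have hs3 : S.card = 3 := by
      rw [htotal] at htot30
      omega
    have himcard : Finset.univ.image τ = Finset.univ := by
      apply Finset.eq_univ_of_card
      have h1 := Finset.card_le_mul_card_image (f := τ) Finset.univ 2 (fun b _ => hfib b)
      rw [card_univ_F4] at h1
      rw [hcodom, hs3]
      have := himle
      rw [hs3] at this
      omega
    have hsurj : ∃ x, τ x = fun _ => 1 := by
      have : (fun _ => (1 : ZMod 2)) ∈ Finset.univ.image τ := himcard ▸ Finset.mem_univ _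
      obtain ⟨x, _, hx⟩ := Finset.mem_image.mp this
      exact ⟨x, hx⟩
    obtain ⟨x, hx⟩ := hsurj
    have hfx : (Finset.univ.filter fun i => L x i ≠ 0) = S := by
      ext i
      simp only [Finset.mem_filter, Finset.mem_univ, true_and]
      constructor
      · intro h
        simp only [hS, Finset.mem_filter, Finset.mem_univ, true_and]
        exact ⟨x, h⟩
      · intro h
        have := congrFun hx ⟨i, h⟩
        simp only [hτ] at this
        rw [this]
        exact one_ne_zero
    have hWx : W x = 3 := by rw [hW]; simp only; rw [hfx, hs3]
    have hx0 : x ≠ 0 := by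
      intro h; rw [h, hW0] at hWx; omega
    have := hlight x hx0
    omega
  · push_neg at hz
    have hinj : ∀ x, L x = 0 → x = 0 := by
      intro x h; by_contra h0; exact hz x h0 h
    have hτinj : Function.Injective τ := by
      intro x y h
      exact (fun_add_eq_zero_iff x y).1 (hinj _ ((hτiff x y).1 h))
    have himeq : (Finset.univ.image τ).card = 16 := by
      rw [Finset.card_image_of_injective _ hτinj, card_univ_F4]
    have hs4lb : 4 ≤ S.card := pow4 (by rw [← himeq]; exact himle)
    have htotle : ∑ x : Fin 4 → ZMod 2, W x ≤ 30 + S.card := by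
      have hsplit := Finset.sum_filter_add_sum_filter_not
        (Finset.univ : Finset (Fin 4 → ZMod 2)) (fun x => x ≠ 0) W
      have hsplit2 := Finset.sum_filter_add_sum_filter_not
        (Finset.univ.filter fun x : Fin 4 → ZMod 2 => x ≠ 0) (fun x => W x ≤ 2) W
      rw [Finset.filter_filter, Finset.filter_filter] at hsplit2
      have h1 : ∑ x ∈ Finset.univ.filter (fun x : Fin 4 → ZMod 2 => x ≠ 0 ∧ W x ≤ 2), W x
          ≤ N * 2 := by
        rw [hNdef]
        have := Finset.sum_le_card_nsmul
          (Finset.univ.filter fun x : Fin 4 → ZMod 2 => x ≠ 0 ∧ W x ≤ 2) W 2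
          (fun x hx => by
            simp only [Finset.mem_filter, Finset.mem_univ, true_and] at hx
            exact hx.2)
        simpa [mul_comm] using this
      have h2 : ∑ x ∈ Finset.univ.filter (fun x : Fin 4 → ZMod 2 => x ≠ 0 ∧ ¬ W x ≤ 2), W x
          ≤ H * S.card := by
        rw [hHdef]
        have := Finset.sum_le_card_nsmul
          (Finset.univ.filter fun x : Fin 4 → ZMod 2 => x ≠ 0 ∧ ¬ W x ≤ 2) W S.card
          (fun x _ => hWle x)
        simpa [mul_comm] using this
      have h3 : ∑ x ∈ Finset.univ.filter (fun x : Fin 4 → ZMod 2 => ¬ x ≠ 0), W x = 0 := by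
        apply Finset.sum_eq_zero
        intro x hx
        simp only [Finset.mem_filter, Finset.mem_univ, true_and, not_not] at hx
        rw [hx, hW0]
      have hNle : N ≤ 15 := by omega
      have hHS : H * S.card ≤ S.card := by
        calc H * S.card ≤ 1 * S.card := Nat.mul_le_mul_right _ hH1
          _ = S.card := one_mul _
      omega
    have hs4 : S.card = 4 := by
      rw [htotal] at htotle
      omega
    obtain ⟨i1, hi1, i2, hi2, hne12⟩ := Finset.one_lt_card.mp (by omega : 1 < S.card)
    have himcard : Finset.univ.image τ = Finset.univ := by
      apply Finset.eq_univ_of_card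
      rw [himeq, hcodom, hs4]; norm_num
    have hsurj : ∀ w : ↥S → ZMod 2, ∃ x, τ x = w := by
      intro w
      have : w ∈ Finset.univ.image τ := himcard ▸ Finset.mem_univ _
      obtain ⟨x, _, hx⟩ := Finset.mem_image.mp this
      exact ⟨x, hx⟩
    obtain ⟨x1, hx1⟩ := hsurj (fun i => if i.1 = i1 then 0 else 1)
    obtain ⟨x2, hx2⟩ := hsurj (fun i => if i.1 = i2 then 0 else 1)
    have hWgen : ∀ (x : Fin 4 → ZMod 2) (j : Fin k), j ∈ S →
        τ x = (fun i => if i.1 = j then 0 else 1) → W x = 3 := by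
      intro x j hj hxj
      have hfil : (Finset.univ.filter fun i => L x i ≠ 0) = S.erase j := by
        ext i
        simp only [Finset.mem_filter, Finset.mem_univ, true_and, Finset.mem_erase]
        constructor
        · intro h
          have hiS : i ∈ S := by
            simp only [hS, Finset.mem_filter, Finset.mem_univ, true_and]; exact ⟨x, h⟩
          refine ⟨?_, hiS⟩
          intro hij
          subst hij
          apply h
          have := congrFun hxj ⟨i, hiS⟩
          simpa [hτ] using this
        · rintro ⟨hij, hiS⟩
          have := congrFun hxj ⟨i, hiS⟩
          simp only [hτ, hij, if_neg] at this
          rw [this]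
          exact one_ne_zero
      rw [hW]; simp only; rw [hfil, Finset.card_erase_of_mem hj, hs4]
    have hW1 : W x1 = 3 := hWgen x1 i1 hi1 hx1
    have hW2 : W x2 = 3 := hWgen x2 i2 hi2 hx2
    have hx10 : x1 ≠ 0 := by intro h; rw [h, hW0] at hW1; omega
    have hx20 : x2 ≠ 0 := by intro h; rw [h, hW0] at hW2; omega
    have hx12 : x1 ≠ x2 := by
      intro h
      rw [h, hx2] at hx1
      have := congrFun hx1 ⟨i1, hi1⟩
      rw [if_neg (fun hh : i1 = i2 => hne12 hh), if_pos rfl] at this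
      exact one_ne_zero this
    have hsub : ({x1, x2} : Finset _) ⊆
        Finset.univ.filter fun x : Fin 4 → ZMod 2 => x ≠ 0 ∧ ¬ W x ≤ 2 := by
      intro b hb
      simp only [Finset.mem_insert, Finset.mem_singleton] at hb
      rcases hb with rfl | rfl
      · simp only [Finset.mem_filter, Finset.mem_univ, true_and]
        exact ⟨hx10, by omega⟩
      · simp only [Finset.mem_filter, Finset.mem_univ, true_and]
        exact ⟨hx20, by omega⟩
    have := Finset.card_le_card hsub
    rw [Finset.card_pair hx12] at this
    omega

end Count
section Bound

lemma colMatroid_indep' {m n : Type*} [Fintype m] [Fintype n] (A : Matrix m n (ZMod 2))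
    {I : Set n} :
    (colMatroid A).Indep I ↔ LinearIndependent (ZMod 2) (fun i : I => A.transpose i) := by
  simp [colMatroid]

theorem evenCycle_card_bound {β : Type*} (M : Matroid β) (hec : M.IsEvenCycle)
    (hsimple : M.IsSimple') (hrank : ∃ B, M.IsBase B ∧ B.ncard = 4) :
    M.E.ncard ≤ 4 ^ 2 - 4 + 1 := by
  classical
  obtain ⟨k, l, A, r, hrep, φ, hbij, hiff⟩ := hec
  obtain ⟨B, hB, hBcard⟩ := hrank
  set v : Fin l → (Fin k → ZMod 2) := A.transpose with hv
  -- ground set facts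
  have hEim : φ '' M.E = Set.univ := hbij.image_eq
  have hEfin : M.E.Finite := Set.Finite.of_finite_image (hEim ▸ Set.finite_univ) hbij.injOn
  have hcardE : M.E.ncard = l := by
    rw [← Set.ncard_image_of_injOn hbij.injOn, hEim, Set.ncard_univ, Nat.card_eq_fintype_card,
      Fintype.card_fin]
  -- simplicity transfer
  have hNs : ∀ j1 j2 : Fin l, (colMatroid A).Indep {j1, j2} := by
    intro j1 j2
    obtain ⟨e1, he1, hφ1⟩ := hbij.surjOn (Set.mem_univ j1)
    obtain ⟨e2, he2, hφ2⟩ := hbij.surjOn (Set.mem_univ j2)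
    have h := hsimple e1 he1 e2 he2
    have h2 := (hiff {e1, e2} (by rw [Set.insert_subset_iff]; exact ⟨he1, Set.singleton_subset_iff.mpr he2⟩)).1 h
    rwa [Set.image_pair, hφ1, hφ2] at h2
  have hnz : ∀ j : Fin l, v j ≠ 0 := by
    intro j
    have h := (colMatroid_indep' A).1 (hNs j j)
    exact h.ne_zero ⟨j, Set.mem_insert j {j}⟩
  have hvinj : Function.Injective v := by
    intro j1 j2 hj
    by_contra hne
    have h := (colMatroid_indep' A).1 (hNs j1 j2)
    have hinj := h.injective
    have : (⟨j1, Set.mem_insert _ _⟩ : ({j1, j2} : Set (Fin l)))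
        = ⟨j2, Set.mem_insert_of_mem _ rfl⟩ := hinj hj
    exact hne (congrArg Subtype.val this)
  -- base transfer
  set B' : Set (Fin l) := φ '' B with hB'
  have hB'card : B'.ncard = 4 := by
    rw [hB', Set.ncard_image_of_injOn (hbij.injOn.mono hB.subset_ground)]
    exact hBcard
  have hB'indep : (colMatroid A).Indep B' := (hiff B hB.subset_ground).1 hB.indep
  have hB'LI : LinearIndependent (ZMod 2) (fun i : B' => v i) := (colMatroid_indep' A).1 hB'indep
  have hspan : ∀ j : Fin l, v j ∈ Submodule.span (ZMod 2) (v '' B') := by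
    intro j
    by_cases hj : j ∈ B'
    · exact Submodule.subset_span ⟨j, hj, rfl⟩
    obtain ⟨x, hx, hφx⟩ := hbij.surjOn (Set.mem_univ j)
    have hxB : x ∉ B := fun h => hj ⟨x, h, hφx⟩
    have hdep : ¬ M.Indep (insert x B) := (hB.insert_dep ⟨hx, hxB⟩).not_indep
    have hdep' : ¬ (colMatroid A).Indep (insert j B') := by
      intro h
      apply hdep
      apply (hiff (insert x B) (Set.insert_subset hx hB.subset_ground)).2
      rwa [Set.image_insert_eq, hφx]
    by_contra hsp
    exact hdep' ((colMatroid_indep' A).2 ((linearIndepOn_insert (f := v) hj).2 ⟨hB'LI, hsp⟩))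
  -- enumerate B'
  haveI : Fintype ↥B' := B'.toFinite.fintype
  have hfc : Fintype.card ↥B' = 4 := by
    rw [← Set.toFinset_card, ← Set.ncard_eq_toFinset_card']
    exact hB'card
  set ε : Fin 4 ≃ ↥B' := (Fintype.equivFinOfCardEq hfc).symm with hε
  set w : Fin 4 → (Fin k → ZMod 2) := fun i => v (ε i) with hw
  have hwLI : LinearIndependent (ZMod 2) w :=
    hB'LI.comp ε ε.injective
  have hrange : Set.range w = v '' B' := by
    have h1 : Set.range w = Set.range (fun i : B' => v i) :=
      ε.surjective.range_comp (fun i : B' => v i)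
    rw [h1, ← Set.image_eq_range]
  -- the linear map c
  set c : (Fin 4 → ZMod 2) →ₗ[ZMod 2] (Fin k → ZMod 2) :=
    { toFun := fun x => ∑ i, x i • w i
      map_add' := by
        intro a b
        simp only [Pi.add_apply, add_smul]
        rw [Finset.sum_add_distrib]
      map_smul' := by
        intro m a
        simp only [Pi.smul_apply, smul_eq_mul, RingHom.id_apply, mul_smul, ← Finset.smul_sum] } with hc
  have hc0 : ∀ x, c x = 0 → x = 0 := by
    intro x hx
    have := Fintype.linearIndependent_iff.1 hwLI x hx
    funext i; exact this i
  have hsurjcols : ∀ j : Fin l, ∃ x, c x = v j ∧ x ≠ 0 := by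
    intro j
    have : v j ∈ Submodule.span (ZMod 2) (Set.range w) := by rw [hrange]; exact hspan j
    obtain ⟨x, hx⟩ := (Submodule.mem_span_range_iff_exists_fun (ZMod 2)).1 this
    refine ⟨x, hx, ?_⟩
    intro h
    rw [h] at hx
    simp only [Pi.zero_apply, zero_smul, Finset.sum_const_zero] at hx
    exact hnz j hx.symm
  -- the zero-out-row-r map
  set πr : (Fin k → ZMod 2) →ₗ[ZMod 2] (Fin k → ZMod 2) :=
    { toFun := fun u i => if i = r then 0 else u i
      map_add' := by
        intro a b; funext i; by_cases h : i = r <;> simp [h]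
      map_smul' := by
        intro m a; funext i; by_cases h : i = r <;> simp [h] } with hπr
  set L : (Fin 4 → ZMod 2) →ₗ[ZMod 2] (Fin k → ZMod 2) := πr.comp c with hL
  have hLapp : ∀ x i, L x i = if i = r then 0 else c x i := fun x i => rfl
  have hcr : ∀ x, x ≠ 0 → L x = 0 → c x r = 1 := by
    intro x hx0 hLx
    have hoff : ∀ i, i ≠ r → c x i = 0 := by
      intro i hi
      have := congrFun hLx i
      rwa [hLapp, if_neg hi] at this
    by_contra h
    have hcxr : c x r = 0 := by
      rcases z2one (c x r) with h1
      by_cases h2 : c x r = 0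
      · exact h2
      · exact absurd (z2one _ h2) h
    apply hx0
    apply hc0
    funext i
    by_cases hi : i = r
    · rw [hi]; exact hcxr
    · exact hoff i hi
  have hker : ∀ x y, L x = 0 → L y = 0 → x = 0 ∨ y = 0 ∨ x = y := by
    intro x y hx hy
    by_cases hx0 : x = 0
    · exact Or.inl hx0
    by_cases hy0 : y = 0
    · exact Or.inr (Or.inl hy0)
    refine Or.inr (Or.inr ?_)
    have hcxy : c x = c y := by
      funext i
      by_cases hi : i = r
      · rw [hi, hcr x hx0 hx, hcr y hy0 hy]
      · have h1 := congrFun hx i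
        have h2 := congrFun hy i
        rw [hLapp, if_neg hi] at h1 h2
        rw [h1, h2]
    have : c (x + y) = 0 := by
      rw [map_add, hcxy, funadd]
    exact (fun_add_eq_zero_iff x y).1 (hc0 _ this)
  -- conclude
  have hmain := count_light_le L hker
  set σ : Fin l → (Fin 4 → ZMod 2) := fun j => Classical.choose (hsurjcols j) with hσ
  have hσspec : ∀ j, c (σ j) = v j ∧ σ j ≠ 0 := fun j => Classical.choose_spec (hsurjcols j)
  have hσinj : Function.Injective σ := by
    intro j1 j2 h
    apply hvinj
    rw [← (hσspec j1).1, ← (hσspec j2).1, h]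
  have hσmem : ∀ j, σ j ∈ Finset.univ.filter fun x : Fin 4 → ZMod 2 =>
      x ≠ 0 ∧ (Finset.univ.filter fun i => L x i ≠ 0).card ≤ 2 := by
    intro j
    simp only [Finset.mem_filter, Finset.mem_univ, true_and]
    refine ⟨(hσspec j).2, ?_⟩
    have hfil : (Finset.univ.filter fun i => L (σ j) i ≠ 0)
        = Finset.univ.filter fun i => i ≠ r ∧ A i j ≠ 0 := by
      ext i
      simp only [Finset.mem_filter, Finset.mem_univ, true_and, hLapp]
      by_cases hi : i = r
      · simp [hi]
      · simp only [if_neg hi, hi, ne_eq, not_false_eq_true, true_and]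
        rw [(hσspec j).1]
        rfl
    rw [hfil]
    have := hrep j
    rwa [Set.ncard_eq_toFinset_card', Set.toFinset_setOf] at this
  have hlle : l ≤ 13 := by
    have h1 := Finset.card_le_card_of_injOn (s := (Finset.univ : Finset (Fin l))) σ (fun j _ => hσmem j)
      (fun a _ b _ h => hσinj h)
    rw [Finset.card_univ, Fintype.card_fin] at h1
    exact h1.trans hmain
  rw [hcardE]
  norm_num
  omega

end Bound
section Constr
open Set

/-- The 13 columns: all nonzero vectors of `GF(2)^4` except `0111` and `1111`. -/
def A13 : Matrix (Fin 4) (Fin 13) (ZMod 2) :=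
  !![0,0,0,0,0,0,1,1,1,1,1,1,1;
     0,0,0,1,1,1,0,0,0,0,1,1,1;
     0,1,1,0,0,1,0,0,1,1,0,0,1;
     1,0,1,0,1,0,0,1,0,1,0,1,0]

def pcol : Fin 13 → (Fin 4 → ZMod 2) := fun j => A13.transpose j

def uu1 : Fin 4 → ZMod 2 := ![0,1,1,1]
def uu2 : Fin 4 → ZMod 2 := ![1,1,1,1]

def ψ (x : Fin 4 → ZMod 2) : Fin 13 :=
  ⟨min 12 (if (x 0).val * 8 + (x 1).val * 4 + (x 2).val * 2 + (x 3).val ≤ 6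
      then (x 0).val * 8 + (x 1).val * 4 + (x 2).val * 2 + (x 3).val - 1
      else (x 0).val * 8 + (x 1).val * 4 + (x 2).val * 2 + (x 3).val - 2),
    by have := Nat.min_le_left 12 (if (x 0).val * 8 + (x 1).val * 4 + (x 2).val * 2 + (x 3).val ≤ 6
        then (x 0).val * 8 + (x 1).val * 4 + (x 2).val * 2 + (x 3).val - 1
        else (x 0).val * 8 + (x 1).val * 4 + (x 2).val * 2 + (x 3).val - 2); omega⟩

lemma hψcol : ∀ j : Fin 13, ψ (pcol j) = j := by decide

lemma hcolprops : ∀ j : Fin 13, pcol j ≠ 0 ∧ pcol j ≠ uu1 ∧ pcol j ≠ uu2 := by decide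

lemma hcover : ∀ x : Fin 4 → ZMod 2, x ≠ 0 → x ≠ uu1 → x ≠ uu2 → pcol (ψ x) = x := by decide

lemma hA13rep : EvenCycleRep A13 0 := by
  intro j
  rw [Set.ncard_eq_toFinset_card', Set.toFinset_setOf]
  revert j
  decide

lemma hsingle : ∀ i : Fin 4, (Pi.single i 1 : Fin 4 → ZMod 2) ≠ 0
    ∧ (Pi.single i 1 : Fin 4 → ZMod 2) ≠ uu1 ∧ (Pi.single i 1 : Fin 4 → ZMod 2) ≠ uu2 := by
  decide

lemma hsum_single : ((Pi.single 1 1 : Fin 4 → ZMod 2) + Pi.single 2 1 + Pi.single 3 1) = uu1 ∧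
    (Pi.single 0 1 : Fin 4 → ZMod 2) = ![1,0,0,0] ∧
    uu1 + ![1,0,0,0] = uu2 := by decide

lemma card_PGIdx : Fintype.card PGIdx = 15 := by decide

end Constr
section TConstr

lemma z2choice : ∀ c : ZMod 2, c = 0 ∨ c = 1 := by decide

lemma char2_cancel2 (p q s : Fin 4 → ZMod 2) : (s + p + q) + p + q = s := by
  have h : (s + p + q) + p + q = s + (p + p) + (q + q) := by abel
  rw [h, funadd, funadd, add_zero, add_zero]

lemma extend_step {m : ℕ} (hm : m < 4) {g : Fin m → (Fin 4 → ZMod 2)}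
    (hg : LinearIndependent (ZMod 2) g) :
    ∃ x, LinearIndependent (ZMod 2) (Fin.cons x g : Fin (m+1) → (Fin 4 → ZMod 2)) := by
  have hne : Submodule.span (ZMod 2) (Set.range g) ≠ ⊤ := by
    intro h
    have h1 := finrank_span_eq_card hg
    rw [h, finrank_top, Module.finrank_pi] at h1
    simp only [Fintype.card_fin] at h1
    omega
  obtain ⟨x, hx⟩ : ∃ x, x ∉ Submodule.span (ZMod 2) (Set.range g) := by
    by_contra h
    push_neg at h
    exact hne (Submodule.eq_top_iff'.2 h)
  exact ⟨x, linearIndependent_fin_cons.2 ⟨hg, hx⟩⟩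

lemma exists_T (a b : Fin 4 → ZMod 2) (ha : a ≠ 0) (hb : b ≠ 0) (hab : a ≠ b) :
    ∃ T : (Fin 4 → ZMod 2) ≃ₗ[ZMod 2] (Fin 4 → ZMod 2), T a = uu1 ∧ T b = uu2 := by
  classical
  have h1 : LinearIndependent (ZMod 2) ![a] := by
    apply linearIndependent_unique_iff.2
    simpa using ha
  have hrange : Set.range ![a] = {a} := by
    rw [Set.range_unique]
    rfl
  have h2 : LinearIndependent (ZMod 2) (Fin.cons (a + b) ![a] : Fin 2 → (Fin 4 → ZMod 2)) := by
    apply linearIndependent_fin_cons.2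
    refine ⟨h1, ?_⟩
    rw [hrange]
    intro hmem
    obtain ⟨c, hc⟩ := Submodule.mem_span_singleton.1 hmem
    rcases z2choice c with rfl | rfl
    · rw [zero_smul] at hc
      exact hab ((fun_add_eq_zero_iff a b).1 hc.symm)
    · rw [one_smul] at hc
      have : b = a + a := fun_add_shift a b a hc.symm
      rw [funadd] at this
      exact hb this
  obtain ⟨x2, h3⟩ := extend_step (by omega) h2
  obtain ⟨x3, h4⟩ := extend_step (by omega) h3
  set w : Fin 4 → (Fin 4 → ZMod 2) := Fin.cons x3 (Fin.cons x2 (Fin.cons (a + b) ![a])) with hwdef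
  have hw2 : w 2 = a + b := rfl
  have hw3 : w 3 = a := rfl
  set u : Fin 4 → (Fin 4 → ZMod 2) := ![w 2, w 3 + w 0 + w 1, w 0, w 1] with hudef
  have hwind := Fintype.linearIndependent_iff.1 h4
  have huLI : LinearIndependent (ZMod 2) u := by
    apply Fintype.linearIndependent_iff.2
    intro g hg
    set g' : Fin 4 → ZMod 2 := ![g 2 + g 1, g 3 + g 1, g 0, g 1] with hg'def
    have hsum : ∑ i, g' i • w i = ∑ i, g i • u i := by
      rw [Fin.sum_univ_four, Fin.sum_univ_four]
      simp only [hg'def, hudef, Matrix.cons_val_zero, Matrix.cons_val_one, Matrix.head_cons,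
        Matrix.cons_val_two, Matrix.tail_cons, Matrix.cons_val_three]
      rw [add_smul, add_smul, smul_add, smul_add]
      abel
    have hz := hwind g' (by rw [hsum]; exact hg)
    have e0 := hz 0
    have e1 := hz 1
    have e2 := hz 2
    have e3 := hz 3
    simp only [hg'def, Matrix.cons_val_zero, Matrix.cons_val_one, Matrix.head_cons,
      Matrix.cons_val_two, Matrix.tail_cons, Matrix.cons_val_three] at e0 e1 e2 e3
    intro i
    fin_cases i
    · exact e2
    · exact e3
    · rw [e3, add_zero] at e0
      exact e0
    · rw [e3, add_zero] at e1
      exact e1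
  haveI : Nonempty (Fin 4) := ⟨0⟩
  have hcard : Fintype.card (Fin 4) = Module.finrank (ZMod 2) (Fin 4 → ZMod 2) := by
    rw [Module.finrank_pi]
  set bas := basisOfLinearIndependentOfCardEqFinrank huLI hcard with hbas
  have hbc : ⇑bas = u := coe_basisOfLinearIndependentOfCardEqFinrank huLI hcard
  set T := bas.equivFun with hT
  have hTu : ∀ i, T (u i) = fun j => if i = j then 1 else 0 := by
    intro i
    funext j
    conv_lhs => rw [← hbc]
    exact bas.equivFun_self i j
  have ha_eq : a = u 1 + u 2 + u 3 := by
    have : u 1 + u 2 + u 3 = (w 3 + w 0 + w 1) + w 0 + w 1 := rfl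
    rw [this, char2_cancel2, hw3]
  have hab_eq : a + b = u 0 := rfl
  have hb_eq : b = a + (a + b) := by
    rw [← add_assoc, funadd, zero_add]
  have hTe : T a = uu1 := by
    rw [ha_eq, map_add, map_add, hTu 1, hTu 2, hTu 3]
    decide
  have hTab : T (a + b) = ![1,0,0,0] := by
    rw [hab_eq, hTu 0]
    decide
  have hTf : T b = uu2 := by
    conv_lhs => rw [hb_eq]
    rw [map_add, hTe, hTab]
    exact hsum_single.2.2
  exact ⟨T, hTe, hTf⟩

end TConstr
section Final
open Set

lemma hsingleinj : ∀ i j : Fin 4, (Pi.single i 1 : Fin 4 → ZMod 2) = Pi.single j 1 → i = j := by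
  decide

lemma hsingLI4 : LinearIndependent (ZMod 2) (fun i : Fin 4 => (Pi.single i 1 : Fin 4 → ZMod 2)) := by
  rw [Fintype.linearIndependent_iff]
  decide

theorem pg32_delete_two_largest_evenCycle' (e f : PGIdx) (hef : e ≠ f) :
    (PG32.del {e, f}).IsEvenCycle ∧ (PG32.del {e, f}).IsSimple' ∧
      (∃ B, (PG32.del {e, f}).IsBase B ∧ B.ncard = 4) ∧
      (PG32.del {e, f}).E.ncard = 4 ^ 2 - 4 + 1 ∧
      ∀ {β : Type*} (M : Matroid β), M.IsEvenCycle → M.IsSimple' →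
        (∃ B, M.IsBase B ∧ B.ncard = 4) → M.E.ncard ≤ 4 ^ 2 - 4 + 1 := by
  classical
  obtain ⟨T, hTe, hTf⟩ := exists_T e.1 f.1 e.2 f.2 (fun h => hef (Subtype.ext h))
  set φ : PGIdx → Fin 13 := fun p => ψ (T p.1) with hφ
  have hdel : PG32.del {e, f} = PG32 ↾ (Set.univ \ ({e, f} : Set PGIdx)) := rfl
  have hground : (PG32.del {e, f}).E = Set.univ \ ({e, f} : Set PGIdx) := rfl
  have hTinj := T.injective
  have hmemE : ∀ p : PGIdx, p ∈ (Set.univ \ ({e, f} : Set PGIdx)) ↔ (p ≠ e ∧ p ≠ f) := by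
    intro p; simp [Set.mem_diff]
  have hPGindep : ∀ I : Set PGIdx, PG32.Indep I ↔
      LinearIndependent (ZMod 2) (fun i : I => (i : PGIdx).1) :=
    fun I => colMatroid_indep' PGMatrix
  have hTprops : ∀ p : PGIdx, p ≠ e → p ≠ f → (T p.1 ≠ 0 ∧ T p.1 ≠ uu1 ∧ T p.1 ≠ uu2) := by
    intro p hpe hpf
    refine ⟨?_, ?_, ?_⟩
    · intro h; exact p.2 (hTinj (by rw [h, map_zero]))
    · intro h; rw [← hTe] at h; exact hpe (Subtype.ext (hTinj h))
    · intro h; rw [← hTf] at h; exact hpf (Subtype.ext (hTinj h))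
  have hcolφ : ∀ p : PGIdx, p ≠ e → p ≠ f → pcol (φ p) = T p.1 := by
    intro p hpe hpf
    obtain ⟨h0, h1, h2⟩ := hTprops p hpe hpf
    exact hcover _ h0 h1 h2
  have hφinj : ∀ p q : PGIdx, p ≠ e → p ≠ f → q ≠ e → q ≠ f → φ p = φ q → p = q := by
    intro p q hpe hpf hqe hqf h
    have h2 := hcolφ p hpe hpf
    rw [h, hcolφ q hqe hqf] at h2
    exact Subtype.ext (hTinj h2.symm)
  -- Bijection
  have hbij : Set.BijOn φ (Set.univ \ ({e, f} : Set PGIdx)) (Set.univ : Set (Fin 13)) := by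
    refine ⟨fun p _ => Set.mem_univ _, ?_, ?_⟩
    · intro p hp q hq h
      rw [hmemE] at hp hq
      exact hφinj p q hp.1 hp.2 hq.1 hq.2 h
    · intro j _
      obtain ⟨h0, h1, h2⟩ := hcolprops j
      have hx0 : T.symm (pcol j) ≠ 0 := by
        intro h
        apply h0
        have h3 := congrArg T h
        rwa [T.apply_symm_apply, map_zero] at h3
      refine ⟨⟨T.symm (pcol j), hx0⟩, ?_, ?_⟩
      · rw [hmemE]
        constructor
        · intro h
          apply h1
          have h4 : T.symm (pcol j) = e.1 := congrArg Subtype.val h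
          rw [← hTe, ← h4, T.apply_symm_apply]
        · intro h
          apply h2
          have h4 : T.symm (pcol j) = f.1 := congrArg Subtype.val h
          rw [← hTf, ← h4, T.apply_symm_apply]
      · show ψ (T (T.symm (pcol j))) = j
        rw [T.apply_symm_apply]
        exact hψcol j
  -- Independence transfer
  have hiff : ∀ I ⊆ Set.univ \ ({e, f} : Set PGIdx),
      ((PG32.del {e, f}).Indep I ↔ (colMatroid A13).Indep (φ '' I)) := by
    intro I hI
    have hIe : ∀ p : I, ((p : PGIdx) ≠ e ∧ (p : PGIdx) ≠ f) := fun p => (hmemE _).1 (hI p.2)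
    have hIinj : Set.InjOn φ I := by
      intro p hp q hq h
      exact hφinj p q (hIe ⟨p, hp⟩).1 (hIe ⟨p, hp⟩).2 (hIe ⟨q, hq⟩).1 (hIe ⟨q, hq⟩).2 h
    set eI : ↥I ≃ ↥(φ '' I) := Equiv.Set.imageOfInjOn φ I hIinj with heI
    have hcomp : (fun j : ↥(φ '' I) => A13.transpose (j : Fin 13)) ∘ eI
        = fun i : ↥I => T (i : PGIdx).1 := by
      funext i
      show A13.transpose (φ (i : PGIdx)) = T (i : PGIdx).1
      exact hcolφ _ (hIe i).1 (hIe i).2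
    rw [hdel, Matroid.restrict_indep_iff, colMatroid_indep' A13]
    constructor
    · rintro ⟨hind, -⟩
      have hLI := (hPGindep I).1 hind
      have hLIT : LinearIndependent (ZMod 2) (fun i : ↥I => T (i : PGIdx).1) :=
        ((T : (Fin 4 → ZMod 2) →ₗ[ZMod 2] (Fin 4 → ZMod 2)).linearIndependent_iff
          (LinearEquiv.ker T)).2 hLI
      apply (linearIndependent_equiv eI).1
      rw [hcomp]
      exact hLIT
    · intro hind
      refine ⟨?_, hI⟩
      apply (hPGindep I).2
      have h1 := (linearIndependent_equiv eI).2 hind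
      rw [hcomp] at h1
      exact ((T : (Fin 4 → ZMod 2) →ₗ[ZMod 2] (Fin 4 → ZMod 2)).linearIndependent_iff
        (LinearEquiv.ker T)).1 h1
  -- Simplicity
  have hsingLI : ∀ q : PGIdx, LinearIndependent (ZMod 2)
      (fun i : ({q} : Set PGIdx) => (i : PGIdx).1) := by
    intro q
    apply linearIndependent_unique_iff.2
    exact q.2
  have hsimple : (PG32.del {e, f}).IsSimple' := by
    intro p hp q hq
    rw [hground, hmemE] at hp hq
    rw [hdel, Matroid.restrict_indep_iff]
    constructor
    · apply (hPGindep _).2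
      by_cases hpq : p = q
      · subst hpq
        rw [Set.pair_eq_singleton]
        exact hsingLI p
      · have hqp : p ∉ ({q} : Set PGIdx) := by simp [hpq]
        apply (linearIndepOn_insert (f := Subtype.val) hqp).2
        refine ⟨hsingLI q, ?_⟩
        rw [Set.image_singleton]
        intro hmem
        obtain ⟨c, hc⟩ := Submodule.mem_span_singleton.1 hmem
        rcases z2choice c with rfl | rfl
        · rw [zero_smul] at hc; exact p.2 hc.symm
        · rw [one_smul] at hc; exact hpq (Subtype.ext hc.symm)
    · intro x hx
      rcases hx with rfl | hx
      · rw [hmemE]; exact hp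
      · rw [Set.mem_singleton_iff] at hx; subst hx; rw [hmemE]; exact hq
  -- Base
  have hg0 : ∀ i : Fin 4, T.symm (Pi.single i 1) ≠ 0 := by
    intro i h
    apply (hsingle i).1
    have h2 := congrArg T h
    rwa [T.apply_symm_apply, map_zero] at h2
  set g : Fin 4 → PGIdx := fun i => ⟨T.symm (Pi.single i 1), hg0 i⟩ with hg
  have hgE : ∀ i, g i ∈ Set.univ \ ({e, f} : Set PGIdx) := by
    intro i
    rw [hmemE]
    constructor
    · intro h
      apply (hsingle i).2.1
      have h4 : T.symm (Pi.single i 1) = e.1 := congrArg Subtype.val h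
      rw [← hTe, ← h4, T.apply_symm_apply]
    · intro h
      apply (hsingle i).2.2
      have h4 : T.symm (Pi.single i 1) = f.1 := congrArg Subtype.val h
      rw [← hTf, ← h4, T.apply_symm_apply]
  have hginj : Function.Injective g := by
    intro i j h
    exact hsingleinj i j (T.symm.injective (congrArg Subtype.val h))
  set B : Set PGIdx := Set.range g with hBdef
  have hsymmLI : LinearIndependent (ZMod 2) (fun i : Fin 4 => T.symm (Pi.single i 1)) :=
    ((T.symm : (Fin 4 → ZMod 2) →ₗ[ZMod 2] (Fin 4 → ZMod 2)).linearIndependent_iff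
      (LinearEquiv.ker T.symm)).2 hsingLI4
  have hBLI : LinearIndependent (ZMod 2) (fun x : B => (x : PGIdx).1) := by
    apply (linearIndependent_equiv (Equiv.ofInjective g hginj)).1
    have hcomp : (fun x : B => (x : PGIdx).1) ∘ (Equiv.ofInjective g hginj)
        = fun i : Fin 4 => T.symm (Pi.single i 1) := rfl
    rw [hcomp]
    exact hsymmLI
  have hspanB : Submodule.span (ZMod 2) (Subtype.val '' B) = ⊤ := by
    have him : (Subtype.val '' B : Set (Fin 4 → ZMod 2))
        = (T.symm : (Fin 4 → ZMod 2) →ₗ[ZMod 2] (Fin 4 → ZMod 2)) ''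
          (Set.range (fun i : Fin 4 => (Pi.single i 1 : Fin 4 → ZMod 2))) := by
      rw [hBdef, ← Set.range_comp, ← Set.range_comp]
      rfl
    rw [him, Submodule.span_image]
    have hsp : Submodule.span (ZMod 2)
        (Set.range (fun i : Fin 4 => (Pi.single i 1 : Fin 4 → ZMod 2))) = ⊤ := by
      apply Submodule.eq_top_of_finrank_eq
      rw [finrank_span_eq_card hsingLI4, Module.finrank_pi]
    rw [hsp, Submodule.map_top, LinearEquiv.range]
  have hBsub : B ⊆ Set.univ \ ({e, f} : Set PGIdx) := by
    rintro _ ⟨i, rfl⟩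
    exact hgE i
  have hBbase : (PG32.del {e, f}).IsBase B := by
    apply Matroid.Indep.isBase_of_forall_insert
    · rw [hdel, Matroid.restrict_indep_iff]
      exact ⟨(hPGindep B).2 hBLI, hBsub⟩
    · intro x hx hind
      rw [hground] at hx
      rw [hdel, Matroid.restrict_indep_iff] at hind
      have hLI := (hPGindep _).1 hind.1
      have hxB : x ∉ B := hx.2
      have h2 := ((linearIndepOn_insert (f := Subtype.val) hxB).1 hLI).2
      rw [hspanB] at h2
      exact h2 Submodule.mem_top
  have hBcard : B.ncard = 4 := by
    rw [hBdef, ← Set.image_univ, Set.ncard_image_of_injOn hginj.injOn, Set.ncard_univ,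
      Nat.card_eq_fintype_card, Fintype.card_fin]
  -- cardinality of ground set
  have hE13 : (PG32.del {e, f}).E.ncard = 4 ^ 2 - 4 + 1 := by
    rw [hground, Set.ncard_diff (Set.subset_univ _), Set.ncard_univ, Nat.card_eq_fintype_card,
      card_PGIdx, Set.ncard_pair hef]
    norm_num
  refine ⟨⟨4, 13, A13, 0, hA13rep, φ, hbij, hiff⟩, hsimple, ⟨B, hBbase, hBcard⟩, hE13,
    fun M hec hs hr => evenCycle_card_bound M hec hs hr⟩

end Final

/-- Deleting any two distinct elements from `PG(3,2)` yields a simple even-cycle matroid of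
rank 4 with `13 = 4^2 - 4 + 1` elements, which is thus a largest simple even-cycle matroid of
rank 4. -/
theorem pg32_delete_two_largest_evenCycle (e f : PGIdx) (hef : e ≠ f) :
    (PG32.del {e, f}).IsEvenCycle ∧ (PG32.del {e, f}).IsSimple' ∧
      (∃ B, (PG32.del {e, f}).IsBase B ∧ B.ncard = 4) ∧
      (PG32.del {e, f}).E.ncard = 4 ^ 2 - 4 + 1 ∧
      ∀ {β : Type*} (M : Matroid β), M.IsEvenCycle → M.IsSimple' →
        (∃ B, M.IsBase B ∧ B.ncard = 4) → M.E.ncard ≤ 4 ^ 2 - 4 + 1 := by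
  exact pg32_delete_two_largest_evenCycle' e f hef
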